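/- Any randomized one-way two-party communication protocol for Index with error probability at most 1/3, where Alice's string S is uniform in {0,1}^N and the index I is uniform in {⌈N/2⌉,...,N}, requires expected message length Ω(N). -/

import Mathlib

open Finset

open Finset

def enc : List Bool → ℕ
  | [] => 1
  | b :: l => 2 * enc l + cond b 1 0

lemma enc_pos (l : List Bool) : 1 ≤ enc l := by
  induction l with
  | nil => simp [enc]
  | cons b l ih => simp only [enc]; cases b <;> simp <;> omega

lemma enc_lt (l : List Bool) : enc l < 2 ^ (l.length + 1) := by
  induction l with
  | nil => simp [enc]
  | cons b l ih =>
    simp only [enc, List.length_cons]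
    have hb : cond b 1 0 ≤ 1 := by cases b <;> simp
    have : 2 ^ (l.length + 1 + 1) = 2 * 2 ^ (l.length + 1) := by ring
    omega

lemma enc_inj : ∀ l1 l2 : List Bool, enc l1 = enc l2 → l1 = l2
  | [], [], _ => rfl
  | [], b :: l, h => by
    have := enc_pos l
    exfalso; simp only [enc] at h; cases b <;> simp at h <;> omega
  | b :: l, [], h => by
    have := enc_pos l
    exfalso; simp only [enc] at h; cases b <;> simp at h <;> omega
  | b1 :: l1, b2 :: l2, h => by
    have h1 := enc_pos l1
    have h2 := enc_pos l2
    simp only [enc] at h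
    have hb : b1 = b2 := by cases b1 <;> cases b2 <;> simp at h ⊢ <;> omega
    subst hb
    have he : enc l1 = enc l2 := by cases b1 <;> simp at h <;> omega
    rw [enc_inj l1 l2 he]

lemma sum_choose_bound (h m : ℕ) :
    (∑ k ∈ range (m + 1), h.choose k) * (3 ^ h * 2 ^ m) ≤ 5 ^ h * 3 ^ m := by
  have step1 : (∑ k ∈ range (m + 1), h.choose k) * (3 ^ h * 2 ^ m)
      ≤ (∑ k ∈ range (m + 1), h.choose k * 2 ^ k * 3 ^ (h - k)) * 3 ^ m := by
    rw [Finset.sum_mul, Finset.sum_mul]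
    apply Finset.sum_le_sum
    intro k hk
    rcases Nat.lt_or_ge h k with hlt | hle
    · simp [Nat.choose_eq_zero_of_lt hlt]
    · have hkm : k ≤ m := by simpa [Nat.lt_succ_iff] using hk
      have e2 : (2 : ℕ) ^ m = 2 ^ k * 2 ^ (m - k) := by rw [← pow_add]; congr 1; omega
      have e3 : (3 : ℕ) ^ h = 3 ^ k * 3 ^ (h - k) := by rw [← pow_add]; congr 1; omega
      have e3m : (3 : ℕ) ^ m = 3 ^ k * 3 ^ (m - k) := by rw [← pow_add]; congr 1; omega
      have h23 : (2 : ℕ) ^ (m - k) ≤ 3 ^ (m - k) := Nat.pow_le_pow_left (by norm_num) _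
      calc h.choose k * (3 ^ h * 2 ^ m)
          = h.choose k * 2 ^ k * 3 ^ (h - k) * 3 ^ k * 2 ^ (m - k) := by rw [e2, e3]; ring
        _ ≤ h.choose k * 2 ^ k * 3 ^ (h - k) * 3 ^ k * 3 ^ (m - k) :=
            Nat.mul_le_mul_left _ h23
        _ = h.choose k * 2 ^ k * 3 ^ (h - k) * 3 ^ m := by rw [e3m]; ring
  have step2 : (∑ k ∈ range (m + 1), h.choose k * 2 ^ k * 3 ^ (h - k)) ≤ 5 ^ h := by
    have sub1 : (∑ k ∈ range (m + 1), h.choose k * 2 ^ k * 3 ^ (h - k))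
        ≤ ∑ k ∈ range (m + h + 1), h.choose k * 2 ^ k * 3 ^ (h - k) :=
      Finset.sum_le_sum_of_subset (Finset.range_subset_range.2 (by omega))
    have sub2 : (∑ k ∈ range (m + h + 1), h.choose k * 2 ^ k * 3 ^ (h - k))
        = ∑ k ∈ range (h + 1), h.choose k * 2 ^ k * 3 ^ (h - k) := by
      symm
      apply Finset.sum_subset (Finset.range_subset_range.2 (by omega))
      intro k _ hk
      simp only [Finset.mem_range, not_lt] at hk
      simp [Nat.choose_eq_zero_of_lt (by omega : h < k)]
    have hpow : (∑ k ∈ range (h + 1), h.choose k * 2 ^ k * 3 ^ (h - k)) = 5 ^ h := by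
      have := add_pow (2 : ℕ) 3 h
      norm_num at this
      rw [this]
      exact Finset.sum_congr rfl fun k _ => by ring
    calc (∑ k ∈ range (m + 1), h.choose k * 2 ^ k * 3 ^ (h - k))
        ≤ _ := sub1
      _ = 5 ^ h := by rw [sub2, hpow]
  calc (∑ k ∈ range (m + 1), h.choose k) * (3 ^ h * 2 ^ m)
      ≤ (∑ k ∈ range (m + 1), h.choose k * 2 ^ k * 3 ^ (h - k)) * 3 ^ m := step1
    _ ≤ 5 ^ h * 3 ^ m := Nat.mul_le_mul_right _ step2

lemma card_small_subsets {α : Type*} [DecidableEq α] (H : Finset α) (m : ℕ) :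
    (H.powerset.filter (fun D => D.card ≤ m)).card
      = ∑ k ∈ range (m + 1), H.card.choose k := by
  have heq : H.powerset.filter (fun D => D.card ≤ m)
      = (range (m + 1)).biUnion (fun k => H.powersetCard k) := by
    ext D
    simp only [mem_filter, mem_powerset, mem_biUnion, mem_range, mem_powersetCard,
      Nat.lt_succ_iff]
    constructor
    · rintro ⟨h1, h2⟩; exact ⟨D.card, h2, h1, rfl⟩
    · rintro ⟨k, hk, h1, rfl⟩; exact ⟨h1, hk⟩
  rw [heq, Finset.card_biUnion]
  · exact Finset.sum_congr rfl fun k _ => Finset.card_powersetCard k H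
  · intro k1 _ k2 _ hne
    simp only [Finset.disjoint_left]
    intro D hD1 hD2
    rw [mem_powersetCard] at hD1 hD2
    exact hne (hD1.2 ▸ hD2.2 ▸ rfl)

lemma card_maskset {N : ℕ} (H : Finset (Fin N)) :
    (Fintype.piFinset (fun I : Fin N =>
      if I ∈ H then ({false} : Finset Bool) else Finset.univ)).card
      = 2 ^ (N - H.card) := by
  rw [Fintype.card_piFinset]
  calc ∏ I : Fin N, (if I ∈ H then ({false} : Finset Bool) else Finset.univ).card
      = ∏ I : Fin N, (if I ∈ H then 1 else 2) := by
        apply Finset.prod_congr rfl; intro I _; split <;> simp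
    _ = 2 ^ (N - H.card) := by
        rw [Finset.prod_ite]
        simp only [Finset.prod_const_one, Finset.prod_const, one_mul]
        congr 1
        have : Finset.univ.filter (fun I : Fin N => ¬ I ∈ H) = Hᶜ := by
          ext I; simp [Finset.mem_compl]
        rw [this, Finset.card_compl, Fintype.card_fin]

lemma count_short_good {N : ℕ} (H : Finset (Fin N)) (m L : ℕ)
    (msg : (Fin N → Bool) → List Bool) (out : List Bool → Fin N → Bool) :
    (univ.filter (fun S : Fin N → Bool =>
        (msg S).length < L ∧ (H.filter (fun I => out (msg S) I ≠ S I)).card ≤ m)).card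
      ≤ 2 ^ L * ((∑ k ∈ range (m + 1), H.card.choose k) * 2 ^ (N - H.card)) := by
  classical
  set A := H.powerset.filter (fun D => D.card ≤ m) with hA
  set B := Fintype.piFinset (fun I : Fin N =>
      if I ∈ H then ({false} : Finset Bool) else (Finset.univ : Finset Bool)) with hB
  have hcard : ((range (2 ^ L)) ×ˢ (A ×ˢ B)).card
      = 2 ^ L * ((∑ k ∈ range (m + 1), H.card.choose k) * 2 ^ (N - H.card)) := by
    rw [Finset.card_product, Finset.card_product, Finset.card_range,
      card_small_subsets, card_maskset]
  rw [← hcard]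
  apply Finset.card_le_card_of_injOn
      (fun S => (enc (msg S), (H.filter (fun I => out (msg S) I ≠ S I),
        fun I => if I ∈ H then false else S I)))
  · intro S hS
    simp only [Finset.mem_coe, mem_filter, mem_univ, true_and] at hS
    simp only [Finset.mem_coe, Finset.mem_product, Finset.mem_range]
    refine ⟨?_, ?_, ?_⟩
    · calc enc (msg S) < 2 ^ ((msg S).length + 1) := enc_lt _
        _ ≤ 2 ^ L := Nat.pow_le_pow_right (by norm_num) (by omega)
    · simp only [hA, mem_filter, mem_powerset]
      exact ⟨Finset.filter_subset _ _, hS.2⟩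
    · simp only [hB, Fintype.mem_piFinset]
      intro I
      by_cases hI : I ∈ H <;> simp [hI]
  · intro S1 h1 S2 h2 heq
    simp only [Prod.mk.injEq] at heq
    obtain ⟨he, hD, hmask⟩ := heq
    have hm : msg S1 = msg S2 := enc_inj _ _ he
    funext I
    by_cases hI : I ∈ H
    · have h1' := Finset.ext_iff.1 hD I
      simp only [mem_filter, hI, true_and] at h1'
      rw [hm] at h1'
      cases hb1 : S1 I <;> cases hb2 : S2 I <;> cases hb3 : out (msg S2) I <;>
        simp [hb1, hb2, hb3] at h1' ⊢
    · have := congrFun hmask I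
      simpa [hI] using this

lemma NC : ∀ t, 79 ≤ t → 248832 * (32 * 28125 ^ 36) ^ t ≤ (31104 ^ 36) ^ t := by
  intro t ht
  induction t, ht using Nat.le_induction with
  | base => norm_num
  | succ n hn ih =>
    rw [pow_succ, pow_succ]
    calc 248832 * ((32 * 28125 ^ 36) ^ n * (32 * 28125 ^ 36))
        = 248832 * (32 * 28125 ^ 36) ^ n * (32 * 28125 ^ 36) := by ring
      _ ≤ (31104 ^ 36) ^ n * 31104 ^ 36 := Nat.mul_le_mul ih (by norm_num)

lemma master (N h m L SA : ℕ) (hN : 5688 ≤ N) (hh : h = N / 2 + 1)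
    (hm : m = 2 * h / 5) (hL : L = N / 72)
    (hSA : SA * (3 ^ h * 2 ^ m) ≤ 5 ^ h * 3 ^ m) :
    12 * (2 ^ L * (SA * 2 ^ (N - h))) ≤ 2 ^ N := by
  have h5m : 5 * m ≤ 2 * h := by omega
  set t := N / 72 with ht_def
  have hNC : 248832 * (32 * 28125 ^ 36) ^ t ≤ (31104 ^ 36) ^ t := NC t (by omega)
  have hR1 : 12 ^ 5 * 2 ^ (5 * L) * 28125 ^ h ≤ 31104 ^ h := by
    have h36 : 36 * t ≤ h := by omega
    have e1 : (28125 : ℕ) ^ h = 28125 ^ (36 * t) * 28125 ^ (h - 36 * t) := by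
      rw [← pow_add]; congr 1; omega
    have e2 : (31104 : ℕ) ^ h = 31104 ^ (36 * t) * 31104 ^ (h - 36 * t) := by
      rw [← pow_add]; congr 1; omega
    have hmono : (28125 : ℕ) ^ (h - 36 * t) ≤ 31104 ^ (h - 36 * t) :=
      Nat.pow_le_pow_left (by norm_num) _
    have e3 : (248832 : ℕ) * (32 * 28125 ^ 36) ^ t = 12 ^ 5 * 2 ^ (5 * L) * 28125 ^ (36 * t) := by
      rw [hL, show (32 : ℕ) = 2 ^ 5 by norm_num, show (248832 : ℕ) = 12 ^ 5 by norm_num,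
        mul_pow, ← pow_mul, ← pow_mul, ← mul_assoc]
    calc 12 ^ 5 * 2 ^ (5 * L) * 28125 ^ h
        = (248832 * (32 * 28125 ^ 36) ^ t) * 28125 ^ (h - 36 * t) := by rw [e3, e1]; ring
      _ ≤ (31104 ^ 36) ^ t * 28125 ^ (h - 36 * t) := Nat.mul_le_mul_right _ hNC
      _ ≤ (31104 ^ 36) ^ t * 31104 ^ (h - 36 * t) := Nat.mul_le_mul_left _ hmono
      _ = 31104 ^ h := by rw [← pow_mul, ← pow_add]; congr 1; omega
  have hPQ : 12 * 2 ^ L * 5 ^ h * 3 ^ m ≤ 2 ^ h * 3 ^ h * 2 ^ m := by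
    have key1 : (3 : ℕ) ^ (5 * m) * 2 ^ (2 * h) ≤ 2 ^ (5 * m) * 3 ^ (2 * h) := by
      have e2 : (2 : ℕ) ^ (2 * h) = 2 ^ (5 * m) * 2 ^ (2 * h - 5 * m) := by
        rw [← pow_add]; congr 1; omega
      have e3 : (3 : ℕ) ^ (2 * h) = 3 ^ (5 * m) * 3 ^ (2 * h - 5 * m) := by
        rw [← pow_add]; congr 1; omega
      have h23 : (2 : ℕ) ^ (2 * h - 5 * m) ≤ 3 ^ (2 * h - 5 * m) :=
        Nat.pow_le_pow_left (by norm_num) _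
      calc (3 : ℕ) ^ (5 * m) * 2 ^ (2 * h)
          = 3 ^ (5 * m) * 2 ^ (5 * m) * 2 ^ (2 * h - 5 * m) := by rw [e2]; ring
        _ ≤ 3 ^ (5 * m) * 2 ^ (5 * m) * 3 ^ (2 * h - 5 * m) := Nat.mul_le_mul_left _ h23
        _ = 2 ^ (5 * m) * 3 ^ (2 * h) := by rw [e3]; ring
    have expand28 : (28125 : ℕ) ^ h = 5 ^ (5 * h) * 3 ^ (2 * h) := by
      rw [show (28125 : ℕ) = 5 ^ 5 * 3 ^ 2 by norm_num, mul_pow, ← pow_mul, ← pow_mul]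
    have expand31 : (31104 : ℕ) ^ h = 2 ^ (7 * h) * 3 ^ (5 * h) := by
      rw [show (31104 : ℕ) = 2 ^ 7 * 3 ^ 5 by norm_num, mul_pow, ← pow_mul, ← pow_mul]
    have h5 : (12 * 2 ^ L * 5 ^ h * 3 ^ m) ^ 5 ≤ (2 ^ h * 3 ^ h * 2 ^ m) ^ 5 := by
      apply Nat.le_of_mul_le_mul_right _ (show 0 < 2 ^ (2 * h) by positivity)
      have eP : (12 * 2 ^ L * 5 ^ h * 3 ^ m) ^ 5 * 2 ^ (2 * h)
          = (12 ^ 5 * 2 ^ (5 * L) * 5 ^ (5 * h)) * (3 ^ (5 * m) * 2 ^ (2 * h)) := by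
        rw [mul_pow, mul_pow, mul_pow, ← pow_mul, ← pow_mul, ← pow_mul,
          mul_comm L 5, mul_comm h 5, mul_comm m 5]
        ring
      have eQ : (2 ^ h * 3 ^ h * 2 ^ m) ^ 5 * 2 ^ (2 * h)
          = (2 ^ (7 * h) * 3 ^ (5 * h)) * 2 ^ (5 * m) := by
        rw [mul_pow, mul_pow, ← pow_mul, ← pow_mul, ← pow_mul,
          show 7 * h = h * 5 + 2 * h by ring, pow_add,
          show 5 * h = h * 5 by ring, show 5 * m = m * 5 by ring]
        ring
      rw [eP, eQ]
      calc (12 ^ 5 * 2 ^ (5 * L) * 5 ^ (5 * h)) * (3 ^ (5 * m) * 2 ^ (2 * h))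
          ≤ (12 ^ 5 * 2 ^ (5 * L) * 5 ^ (5 * h)) * (2 ^ (5 * m) * 3 ^ (2 * h)) :=
            Nat.mul_le_mul_left _ key1
        _ = (12 ^ 5 * 2 ^ (5 * L) * 28125 ^ h) * 2 ^ (5 * m) := by rw [expand28]; ring
        _ ≤ 31104 ^ h * 2 ^ (5 * m) := Nat.mul_le_mul_right _ hR1
        _ = (2 ^ (7 * h) * 3 ^ (5 * h)) * 2 ^ (5 * m) := by rw [expand31]
    exact (Nat.pow_le_pow_iff_left (by norm_num)).1 h5
  have hhN : h ≤ N := by omega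
  apply Nat.le_of_mul_le_mul_right _ (show 0 < 3 ^ h * 2 ^ m by positivity)
  calc 12 * (2 ^ L * (SA * 2 ^ (N - h))) * (3 ^ h * 2 ^ m)
      = (12 * 2 ^ L) * (SA * (3 ^ h * 2 ^ m)) * 2 ^ (N - h) := by ring
    _ ≤ (12 * 2 ^ L) * (5 ^ h * 3 ^ m) * 2 ^ (N - h) :=
        Nat.mul_le_mul_right _ (Nat.mul_le_mul_left _ hSA)
    _ = (12 * 2 ^ L * 5 ^ h * 3 ^ m) * 2 ^ (N - h) := by ring
    _ ≤ (2 ^ h * 3 ^ h * 2 ^ m) * 2 ^ (N - h) := Nat.mul_le_mul_right _ hPQ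
    _ = (2 ^ h * 2 ^ (N - h)) * (3 ^ h * 2 ^ m) := by ring
    _ = 2 ^ N * (3 ^ h * 2 ^ m) := by rw [← pow_add]; congr 2; omega


set_option maxHeartbeats 1000000 in
/-- Any randomized one-way protocol for Index (Alice holds
`S : Fin N → Bool`, Bob holds a 1-indexed index `I` with `⌈N/2⌉ ≤ I ≤ N`, modelled
by random seeds `r : R`, Alice's message `msg r S : List Bool` and Bob's output
`out r`) with error probability at most `1/3` over uniform inputs and seeds has
expected message length `Ω(N)`. -/
theorem stmt13 :
    ∃ c : ℝ, 0 < c ∧ ∃ N0 : ℕ, ∀ N : ℕ, N0 ≤ N →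
      ∀ (R : Type) [Fintype R] [Nonempty R],
      ∀ (msg : R → (Fin N → Bool) → List Bool)
        (out : R → List Bool → Fin N → Bool),
        ((∑ r : R, ∑ S : Fin N → Bool,
            ((Finset.univ.filter
              (fun I : Fin N => (N + 1) / 2 ≤ (I : ℕ) + 1 ∧
                out r (msg r S) I ≠ S I)).card : ℝ))
          ≤ 1 / 3 * ((Fintype.card R : ℝ) * 2 ^ N * ((N - (N + 1) / 2 + 1 : ℕ) : ℝ))) →
        c * N ≤ (∑ r : R, ∑ S : Fin N → Bool, ((msg r S).length : ℝ)) /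
          ((Fintype.card R : ℝ) * 2 ^ N) := by
  refine ⟨1/1728, by norm_num, 5688, ?_⟩
  intro N hN R _ _ msg out herr
  classical
  set H : Finset (Fin N) := univ.filter (fun I : Fin N => (N + 1) / 2 ≤ (I : ℕ) + 1) with hH
  have hHcard : H.card = N / 2 + 1 := by
    have e1 : H.card = ((range N).filter (fun i => (N + 1) / 2 ≤ i + 1)).card := by
      rw [hH, Finset.card_filter, Finset.card_filter]
      exact Fin.sum_univ_eq_sum_range (fun i => if (N + 1) / 2 ≤ i + 1 then 1 else 0) N
    have e2 : (range N).filter (fun i => (N + 1) / 2 ≤ i + 1)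
        = Finset.Ico ((N + 1) / 2 - 1) N := by
      ext i; simp only [Finset.mem_filter, Finset.mem_range, Finset.mem_Ico]; omega
    rw [e1, e2, Nat.card_Ico]
    omega
  clear_value H
  set h := H.card with hh_def
  clear_value h
  set m := 2 * h / 5 with hm_def
  clear_value m
  set L := N / 72 with hL_def
  clear_value L
  -- rewrite hypothesis
  have hfix : ∀ (r : R) (S : Fin N → Bool),
      Finset.univ.filter (fun I : Fin N => (N + 1) / 2 ≤ (I : ℕ) + 1 ∧
          out r (msg r S) I ≠ S I)
        = H.filter (fun I => out r (msg r S) I ≠ S I) := by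
    intro r S; rw [hH, Finset.filter_filter]
  have hcast : ((N - (N + 1) / 2 + 1 : ℕ) : ℝ) = (h : ℝ) := by
    have : N - (N + 1) / 2 + 1 = h := by omega
    rw [this]
  simp only [hfix, hcast] at herr
  -- the three classes
  set Bad : R → Finset (Fin N → Bool) := fun r => univ.filter (fun S =>
      m + 1 ≤ (H.filter (fun I => out r (msg r S) I ≠ S I)).card) with hBad
  set Gs : R → Finset (Fin N → Bool) := fun r => univ.filter (fun S =>
      (msg r S).length < L ∧ (H.filter (fun I => out r (msg r S) I ≠ S I)).card ≤ m) with hGs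
  set Long : R → Finset (Fin N → Bool) := fun r => univ.filter (fun S =>
      L ≤ (msg r S).length) with hLong
  clear_value Bad Gs Long
  have cover : ∀ r : R, (2 : ℕ) ^ N ≤ (Bad r).card + ((Gs r).card + (Long r).card) := by
    intro r
    have hsub : (univ : Finset (Fin N → Bool)) ⊆ Bad r ∪ (Gs r ∪ Long r) := by
      intro S _
      simp only [hBad, hGs, hLong, Finset.mem_union, Finset.mem_filter, Finset.mem_univ,
        true_and]
      omega
    calc (2 : ℕ) ^ N = (univ : Finset (Fin N → Bool)).card := by
          rw [Finset.card_univ, Fintype.card_fun, Fintype.card_bool, Fintype.card_fin]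
      _ ≤ (Bad r ∪ (Gs r ∪ Long r)).card := Finset.card_le_card hsub
      _ ≤ (Bad r).card + (Gs r ∪ Long r).card := Finset.card_union_le _ _
      _ ≤ (Bad r).card + ((Gs r).card + (Long r).card) :=
          Nat.add_le_add_left (Finset.card_union_le _ _) _
  have hcoverT : Fintype.card R * 2 ^ N
      ≤ (∑ r : R, (Bad r).card) + ((∑ r : R, (Gs r).card) + (∑ r : R, (Long r).card)) := by
    calc Fintype.card R * 2 ^ N = ∑ _r : R, (2 : ℕ) ^ N := by
          rw [Finset.sum_const, Finset.card_univ, smul_eq_mul]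
      _ ≤ ∑ r : R, ((Bad r).card + ((Gs r).card + (Long r).card)) :=
          Finset.sum_le_sum fun r _ => cover r
      _ = _ := by rw [Finset.sum_add_distrib, Finset.sum_add_distrib]
  have markov : (m + 1) * (∑ r : R, (Bad r).card)
      ≤ ∑ r : R, ∑ S : Fin N → Bool, (H.filter (fun I => out r (msg r S) I ≠ S I)).card := by
    rw [Finset.mul_sum]
    apply Finset.sum_le_sum
    intro r _
    calc (m + 1) * (Bad r).card = ∑ _S ∈ Bad r, (m + 1) := by
          rw [Finset.sum_const, smul_eq_mul, mul_comm]
      _ ≤ ∑ S ∈ Bad r, (H.filter (fun I => out r (msg r S) I ≠ S I)).card := by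
          apply Finset.sum_le_sum
          intro S hS
          simp only [hBad, Finset.mem_filter] at hS
          exact hS.2
      _ ≤ ∑ S : Fin N → Bool, (H.filter (fun I => out r (msg r S) I ≠ S I)).card :=
          Finset.sum_le_sum_of_subset (Finset.subset_univ _)
  have gsbound : ∀ r : R, 12 * (Gs r).card ≤ 2 ^ N := by
    intro r
    have h1 := count_short_good H m L (msg r) (out r)
    rw [← hh_def] at h1
    simp only [hGs]
    have h2 := master N h m L (∑ k ∈ range (m + 1), h.choose k) hN hHcard
      hm_def hL_def (sum_choose_bound h m)
    exact le_trans (Nat.mul_le_mul_left 12 h1) h2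
  have longbound : ∀ r : R, L * (Long r).card ≤ ∑ S : Fin N → Bool, (msg r S).length := by
    intro r
    calc L * (Long r).card = ∑ _S ∈ Long r, L := by
          rw [Finset.sum_const, smul_eq_mul, mul_comm]
      _ ≤ ∑ S ∈ Long r, (msg r S).length := by
          apply Finset.sum_le_sum
          intro S hS
          simp only [hLong, Finset.mem_filter] at hS
          exact hS.2
      _ ≤ ∑ S : Fin N → Bool, (msg r S).length :=
          Finset.sum_le_sum_of_subset (Finset.subset_univ _)
  -- real arithmetic
  set TB := ∑ r : R, (Bad r).card with hTB_def
  set TG := ∑ r : R, (Gs r).card with hTG_def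
  set TL := ∑ r : R, (Long r).card with hTL_def
  have hTpos : (0 : ℝ) < (Fintype.card R : ℝ) * 2 ^ N := by
    have h0 : 0 < Fintype.card R := Fintype.card_pos
    positivity
  have markovR := (Nat.cast_le (α := ℝ)).2 markov
  push_cast at markovR
  have f2 : ((m : ℝ) + 1) * TB ≤ 1 / 3 * ((Fintype.card R : ℝ) * 2 ^ N * h) :=
    le_trans markovR herr
  have f1 : (Fintype.card R : ℝ) * 2 ^ N ≤ (TB : ℝ) + ((TG : ℝ) + (TL : ℝ)) := by
    exact_mod_cast hcoverT
  have f3 : 12 * (TG : ℝ) ≤ (Fintype.card R : ℝ) * 2 ^ N := by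
    have hn : 12 * TG ≤ Fintype.card R * 2 ^ N := by
      calc 12 * TG = ∑ r : R, 12 * (Gs r).card := by rw [hTG_def, Finset.mul_sum]
        _ ≤ ∑ _r : R, 2 ^ N := Finset.sum_le_sum fun r _ => gsbound r
        _ = Fintype.card R * 2 ^ N := by
            rw [Finset.sum_const, Finset.card_univ, smul_eq_mul]
    exact_mod_cast hn
  have f4 : (L : ℝ) * TL ≤ ∑ r : R, ∑ S : Fin N → Bool, ((msg r S).length : ℝ) := by
    have hn : L * TL ≤ ∑ r : R, ∑ S : Fin N → Bool, (msg r S).length := by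
      rw [hTL_def, Finset.mul_sum]
      exact Finset.sum_le_sum fun r _ => longbound r
    exact_mod_cast hn
  have h2h5 : 2 * h ≤ 5 * (m + 1) := by clear * - hm_def; omega
  have hTB6 : 6 * (TB : ℝ) ≤ 5 * ((Fintype.card R : ℝ) * 2 ^ N) := by
    have hm1 : (0 : ℝ) < (m : ℝ) + 1 := by positivity
    have h2h5R : 2 * (h : ℝ) ≤ 5 * ((m : ℝ) + 1) := by exact_mod_cast h2h5
    have hint := mul_le_mul_of_nonneg_left h2h5R (le_of_lt hTpos)
    have step : (6 * (TB : ℝ)) * ((m : ℝ) + 1)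
        ≤ (5 * ((Fintype.card R : ℝ) * 2 ^ N)) * ((m : ℝ) + 1) := by nlinarith [f2, hint]
    exact le_of_mul_le_mul_right step hm1
  have hTL12 : ((Fintype.card R : ℝ) * 2 ^ N) / 12 ≤ (TL : ℝ) := by linarith
  have hL144 : (N : ℝ) ≤ 144 * (L : ℝ) := by exact_mod_cast (show N ≤ 144 * L by clear * - hN hL_def; omega)
  rw [le_div_iff₀ hTpos]
  calc 1 / 1728 * (N : ℝ) * ((Fintype.card R : ℝ) * 2 ^ N)
      = (N : ℝ) / 144 * (((Fintype.card R : ℝ) * 2 ^ N) / 12) := by ring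
    _ ≤ (L : ℝ) * (((Fintype.card R : ℝ) * 2 ^ N) / 12) := by
        apply mul_le_mul_of_nonneg_right _ (by positivity)
        linarith
    _ ≤ (L : ℝ) * TL := mul_le_mul_of_nonneg_left hTL12 (Nat.cast_nonneg _)
    _ ≤ _ := f4
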